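/- For even s, the multibracket of associative algebra elements defined by [x_1,...,x_s] = Σ_{σ∈S_s} sgn(σ) x_{σ(1)}···x_{σ(s)} satisfies the generalized Jacobi identity: Σ_{σ∈S_{2s-1}} sgn(σ) [[x_{σ(1)},...,x_{σ(s)}], x_{σ(s+1)},...,x_{σ(2s-1)}] = 0. -/

import Mathlib

set_option linter.unreachableTactic false
set_option linter.unusedTactic false
set_option maxHeartbeats 1000000

/-- The fully antisymmetrized `s`-fold product in an associative algebra:
`[x_1,...,x_s] = Σ_{σ ∈ S_s} sgn(σ) x_{σ(1)} ⋯ x_{σ(s)}`. -/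
noncomputable def multibracket {A : Type*} [Ring A] {s : ℕ} (x : Fin s → A) : A :=
  ∑ σ : Equiv.Perm (Fin s), (Equiv.Perm.sign σ : ℤ) • (List.ofFn fun i => x (σ i)).prod

namespace GJIAux
open Equiv Equiv.Perm Fin

/-- square of a sign cast to ℤ is 1 -/
lemma sq_one (u : ℤˣ) : ((u : ℤ)) * ((u : ℤ)) = 1 := by
  rw [← Units.val_mul, Int.units_mul_self, Units.val_one]

/-- generic absorption of a fixed permutation into the alternating sum -/
lemma absorb {A : Type*} [Ring A] {n : ℕ} (e : Equiv.Perm (Fin n)) (F : Equiv.Perm (Fin n) → A) :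
    ∑ σ : Equiv.Perm (Fin n), (Equiv.Perm.sign σ : ℤ) • F (σ * e)
      = (Equiv.Perm.sign e : ℤ) • ∑ σ : Equiv.Perm (Fin n), (Equiv.Perm.sign σ : ℤ) • F σ := by
  rw [Finset.smul_sum]
  refine Fintype.sum_equiv (Equiv.mulRight e) _ _ fun σ => ?_
  simp only [Equiv.coe_mulRight, smul_smul]
  congr 1
  rw [Equiv.Perm.sign_mul, Units.val_mul]
  rw [show (Equiv.Perm.sign e : ℤ) * ((Equiv.Perm.sign σ : ℤ) * (Equiv.Perm.sign e : ℤ))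
      = (Equiv.Perm.sign σ : ℤ) * ((Equiv.Perm.sign e : ℤ) * (Equiv.Perm.sign e : ℤ)) by ring,
    sq_one, mul_one]

/-- sum of alternating signs over `Fin (t+1)` for odd `t` -/
lemma neg_one_sum (t : ℕ) (ht : Odd t) : ∑ k : Fin (t+1), ((-1 : ℤ)) ^ (k : ℕ) = 0 := by
  rw [Fin.sum_univ_eq_sum_range (fun k => ((-1 : ℤ)) ^ k)]
  obtain ⟨m, rfl⟩ := ht
  induction m with
  | zero => decide
  | succ m ih =>
      rw [show 2 * (m + 1) + 1 + 1 = (2 * m + 1 + 1) + 1 + 1 by ring,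
        Finset.sum_range_succ, Finset.sum_range_succ, ih]
      have h1 : ((-1 : ℤ)) ^ (2 * m + 1 + 1) = 1 := by
        rw [show 2 * m + 1 + 1 = 2 * (m + 1) by ring, pow_mul]; norm_num
      have h2 : ((-1 : ℤ)) ^ (2 * m + 1 + 1 + 1) = -1 := by
        rw [pow_succ, h1]; ring
      rw [h1, h2]; ring

/-- The rotation permutation: rotates the first `s+k` elements of `Fin (s+t)` by `s`,
moving the block `[k, k+s)` to the front. -/
def rotPerm (s t k : ℕ) (hk : k ≤ t) : Perm (Fin (s + t)) where
  toFun r := if h : r.val < k then ⟨s + r.val, by omega⟩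
             else if h2 : r.val < k + s then ⟨r.val - k, by omega⟩ else r
  invFun r := if h : r.val < s then ⟨r.val + k, by omega⟩
              else if h2 : r.val < s + k then ⟨r.val - s, by omega⟩ else r
  left_inv := by
    intro r
    dsimp only
    by_cases h1 : r.val < k
    · rw [dif_pos h1, dif_neg (by first | (simp; omega) | simp | omega), dif_pos (by first | (simp; omega) | simp | omega)]
      ext; simp
    · rw [dif_neg h1]
      by_cases h2 : r.val < k + s
      · rw [dif_pos h2, dif_pos (by first | (simp; omega) | simp | omega)]
        ext; simp; all_goals omega
      · rw [dif_neg h2, dif_neg (by first | (simp; omega) | simp | omega), dif_neg (by first | (simp; omega) | simp | omega)]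
  right_inv := by
    intro r
    dsimp only
    by_cases h1 : r.val < s
    · rw [dif_pos h1, dif_neg (by first | (simp; omega) | simp | omega), dif_pos (by first | (simp; omega) | simp | omega)]
      ext; simp; all_goals omega
    · rw [dif_neg h1]
      by_cases h2 : r.val < s + k
      · rw [dif_pos h2, dif_pos (by first | (simp; omega) | simp | omega)]
        ext; simp; all_goals omega
      · rw [dif_neg h2, dif_neg (by first | (simp; omega) | simp | omega), dif_neg (by first | (simp; omega) | simp | omega)]

lemma rotPerm_val (s t k : ℕ) (hk : k ≤ t) (r : Fin (s + t)) :
    (rotPerm s t k hk r).val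
      = if r.val < k then s + r.val else if r.val < k + s then r.val - k else r.val := by
  show (if h : r.val < k then (⟨s + r.val, by omega⟩ : Fin (s+t))
             else if h2 : r.val < k + s then ⟨r.val - k, by omega⟩ else r).val = _
  split_ifs with h1 h2 <;> rfl

lemma finRotate_pow_val {m : ℕ} (hm : 0 < m) (j : ℕ) (r : Fin m) :
    (((finRotate m) ^ j) r).val = (r.val + j) % m := by
  obtain ⟨m', rfl⟩ : ∃ m', m = m' + 1 := ⟨m - 1, by omega⟩
  induction j generalizing r with
  | zero => simp [Nat.mod_eq_of_lt r.isLt]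
  | succ j ih =>
      rw [pow_succ, Equiv.Perm.mul_apply, finRotate_succ_apply, ih]
      rw [Fin.val_add, Fin.val_one', Nat.mod_add_mod,
        show r.val + 1 % (m' + 1) + j = r.val + j + 1 % (m' + 1) by omega, Nat.add_mod_mod]
      first | rfl | (congr 1; omega) | (congr 1)



lemma sign_rotPerm (s t k : ℕ) (hk : k ≤ t) (hs : Even s) (hs0 : 0 < s) :
    Equiv.Perm.sign (rotPerm s t k hk) = 1 := by
  classical
  let f : Fin (s + k) ≃ {r : Fin (s + t) // r.val < s + k} :=
    { toFun := fun i => ⟨⟨i.val, by omega⟩, by simpa using i.isLt⟩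
      invFun := fun r => ⟨r.1.val, r.2⟩
      left_inv := fun i => rfl
      right_inv := fun r => by ext; rfl }
  have hrot : rotPerm s t k hk = (((finRotate (s + k)) ^ s).extendDomain f) := by
    refine Equiv.ext fun r => Fin.ext ?_
    by_cases h : r.val < s + k
    · rw [Equiv.Perm.extendDomain_apply_subtype _ f h, rotPerm_val]
      have hv : ((f (((finRotate (s + k)) ^ s) (f.symm ⟨r, h⟩))) : Fin (s + t)).val
          = (r.val + s) % (s + k) := by
        show ((((finRotate (s + k)) ^ s) (f.symm ⟨r, h⟩))).val = _
        rw [finRotate_pow_val (by omega : 0 < s + k)]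
        rfl
      rw [hv]
      by_cases h1 : r.val < k
      · rw [if_pos h1, Nat.mod_eq_of_lt (by omega)]
        omega
      · rw [if_neg h1, if_pos (by omega : r.val < k + s),
          Nat.mod_eq_sub_mod (by omega : s + k ≤ r.val + s),
          show r.val + s - (s + k) = r.val - k by omega,
          Nat.mod_eq_of_lt (by omega)]
    · rw [Equiv.Perm.extendDomain_apply_not_subtype _ f h, rotPerm_val,
        if_neg (by omega), if_neg (by omega)]
  rw [hrot, Equiv.Perm.sign_extendDomain, map_pow]
  obtain ⟨m, hm⟩ := hs
  rw [hm, ← two_mul, pow_mul, Int.units_sq, one_pow]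



variable {A : Type*} [Ring A]

lemma ofFn_cons_cycleRange (t : ℕ) (B : A) (z : Fin t → A) (k : Fin (t + 1)) :
    (List.ofFn fun i : Fin (t + 1) => (Fin.cons B z : Fin (t + 1) → A) (k.cycleRange i))
      = (List.ofFn fun i : Fin k.val => z (Fin.castLE (by omega : k.val ≤ t) i))
        ++ [B]
        ++ (List.ofFn fun i : Fin (t - k.val) => z ⟨k.val + i.val, by omega⟩) := by
  have hk : k.val ≤ t := by omega
  apply List.ext_getElem
  · simp; omega
  intro r h1 h2
  rw [List.length_ofFn] at h1
  simp only [List.getElem_ofFn, List.getElem_append, List.length_ofFn, List.length_append,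
    List.length_singleton]
  split_ifs with h3 h4
  · -- r < k
    have hlt : (⟨r, h1⟩ : Fin (t + 1)) < k := h4
    rw [Fin.cycleRange_of_lt hlt]
    have hsucc : (⟨r, h1⟩ : Fin (t + 1)) + 1 = Fin.succ ⟨r, by omega⟩ := by
      apply Fin.ext
      rw [Fin.val_add_one_of_lt (lt_of_lt_of_le hlt (Fin.le_last k))]
      rfl
    rw [hsucc, Fin.cons_succ]
    rfl
  · -- r = k
    have heq : (⟨r, h1⟩ : Fin (t + 1)) = k := by
      apply Fin.ext
      show r = k.val
      omega
    rw [heq, Fin.cycleRange_self, Fin.cons_zero, List.getElem_singleton]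
  · -- r > k
    have hgt : k < (⟨r, h1⟩ : Fin (t + 1)) := by
      rw [Fin.lt_def]
      show k.val < r
      omega
    rw [Fin.cycleRange_of_gt hgt]
    have hsucc : (⟨r, h1⟩ : Fin (t + 1)) = Fin.succ ⟨r - 1, by omega⟩ := by
      apply Fin.ext
      show r = (r - 1) + 1
      omega
    rw [hsucc, Fin.cons_succ]
    congr 1
    apply Fin.ext
    show r - 1 = k.val + (r - (k.val + 1))
    omega

lemma ofFn_rotPerm (s t k : ℕ) (hk : k ≤ t) (y : Fin (s + t) → A) :
    (List.ofFn fun r => y (rotPerm s t k hk r))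
      = (List.ofFn fun i : Fin k => y (Fin.natAdd s (Fin.castLE hk i)))
        ++ (List.ofFn fun j : Fin s => y (Fin.castAdd t j))
        ++ (List.ofFn fun i : Fin (t - k) => y (Fin.natAdd s ⟨k + i.val, by omega⟩)) := by
  apply List.ext_getElem
  · simp; omega
  intro r h1 h2
  rw [List.length_ofFn] at h1
  simp only [List.getElem_ofFn, List.getElem_append, List.length_ofFn, List.length_append]
  have hval := rotPerm_val s t k hk ⟨r, h1⟩
  rw [show ((⟨r, h1⟩ : Fin (s + t))).val = r from rfl] at hval
  split_ifs with h3 h4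
  · -- r < k : y (rotPerm ⟨r⟩) = y (natAdd s (castLE hk ⟨r, h4⟩))
    congr 1
    apply Fin.ext
    show (rotPerm s t k hk ⟨r, h1⟩).val = s + r
    rw [hval, if_pos h4]
  · -- k ≤ r < k + s
    congr 1
    apply Fin.ext
    show (rotPerm s t k hk ⟨r, h1⟩).val = r - k
    rw [hval, if_neg h4, if_pos (by omega)]
  · -- r ≥ k + s
    congr 1
    apply Fin.ext
    show (rotPerm s t k hk ⟨r, h1⟩).val = s + (k + (r - (k + s)))
    rw [hval, if_neg (by omega), if_neg (by omega)]
    omega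


open Equiv Equiv.Perm Fin

/-- block-diagonal permutation on `Fin (s + t)` -/
def phi {s t : ℕ} (a : Perm (Fin s)) (b : Perm (Fin t)) : Perm (Fin (s + t)) :=
  finSumFinEquiv.permCongr (Equiv.sumCongr a b)

lemma phi_castAdd {s t : ℕ} (a : Perm (Fin s)) (b : Perm (Fin t)) (i : Fin s) :
    phi a b (Fin.castAdd t i) = Fin.castAdd t (a i) := by
  simp [phi, Equiv.permCongr_apply]

lemma phi_natAdd {s t : ℕ} (a : Perm (Fin s)) (b : Perm (Fin t)) (j : Fin t) :
    phi a b (Fin.natAdd s j) = Fin.natAdd s (b j) := by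
  simp [phi, Equiv.permCongr_apply]

lemma sign_phi {s t : ℕ} (a : Perm (Fin s)) (b : Perm (Fin t)) :
    Equiv.Perm.sign (phi a b) = sign a * sign b := by
  rw [phi, Equiv.Perm.sign_permCongr, Equiv.Perm.sign_sumCongr]

section core
variable {t : ℕ} {A : Type*} [Ring A] (x : Fin ((t + 1) + t) → A)

/-- the inner block product -/
def blk (σ : Perm (Fin ((t + 1) + t))) (τ : Perm (Fin (t + 1))) : A :=
  (List.ofFn fun j : Fin (t + 1) => x (σ (Fin.castAdd t (τ j)))).prod

/-- the single elements -/
def zf (σ : Perm (Fin ((t + 1) + t))) : Fin t → A := fun j => x (σ (Fin.natAdd (t + 1) j))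

/-- a fully expanded term -/
def pfun (σ : Perm (Fin ((t + 1) + t))) (π τ : Perm (Fin (t + 1))) : A :=
  (List.ofFn fun i : Fin (t + 1) =>
    (Fin.cons (blk x σ τ) (zf x σ) : Fin (t + 1) → A) (π i)).prod

/-- a plain product term -/
def qfun (σ : Perm (Fin ((t + 1) + t))) : A := (List.ofFn fun r => x (σ r)).prod

lemma expand (σ : Perm (Fin ((t + 1) + t))) :
    multibracket (Fin.cons (multibracket fun i : Fin (t + 1) => x (σ (Fin.castAdd t i)))
        (zf x σ))
      = ∑ π : Perm (Fin (t + 1)), ∑ τ : Perm (Fin (t + 1)),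
          ((sign π : ℤ) * (sign τ : ℤ)) • pfun x σ π τ := by
  classical
  rw [multibracket]
  refine Finset.sum_congr rfl fun π _ => ?_
  have hupd : ∀ C : A,
      (fun i : Fin (t + 1) => (Fin.cons C (zf x σ) : Fin (t + 1) → A) (π i))
        = Function.update
            (fun i : Fin (t + 1) => (Fin.cons 0 (zf x σ) : Fin (t + 1) → A) (π i))
            (π⁻¹ 0) C := by
    intro C
    funext i
    by_cases h : i = π⁻¹ 0
    · subst h
      rw [Function.update_self, (show π (π⁻¹ 0) = 0 from (Equiv.eq_symm_apply π).mp rfl), Fin.cons_zero]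
    · rw [Function.update_of_ne h]
      have h0 : π i ≠ 0 := by
        intro hc
        exact h (by rw [← hc, (show π⁻¹ (π i) = i from Equiv.Perm.inv_eq_iff_eq.mpr rfl)])
      obtain ⟨j, hj⟩ := Fin.exists_succ_eq.mpr h0
      rw [← hj, Fin.cons_succ, Fin.cons_succ]
  set f := MultilinearMap.mkPiAlgebraFin ℤ (t + 1) A with hf
  have hfl : ∀ C : A,
      (List.ofFn fun i : Fin (t + 1) => (Fin.cons C (zf x σ) : Fin (t + 1) → A) (π i)).prod
        = (f.toLinearMap
            (fun i : Fin (t + 1) => (Fin.cons 0 (zf x σ) : Fin (t + 1) → A) (π i)) (π⁻¹ 0)) C := by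
    intro C
    rw [MultilinearMap.toLinearMap_apply, ← hupd C, hf, MultilinearMap.mkPiAlgebraFin_apply]
  rw [hfl, multibracket, map_sum, Finset.smul_sum]
  refine Finset.sum_congr rfl fun τ _ => ?_
  rw [LinearMap.map_smul, ← hfl, smul_smul]
  rfl

lemma p_tau (σ : Perm (Fin ((t + 1) + t))) (π τ : Perm (Fin (t + 1))) :
    pfun x σ π τ = pfun x (σ * phi τ 1) π 1 := by
  unfold pfun
  have hb : blk x (σ * phi τ 1) 1 = blk x σ τ := by
    unfold blk
    refine congrArg List.prod (congrArg List.ofFn (funext fun j => ?_))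
    rw [Equiv.Perm.mul_apply, Equiv.Perm.one_apply, phi_castAdd]
  have hz : zf x (σ * phi τ 1) = zf x σ := by
    funext j
    unfold zf
    rw [Equiv.Perm.mul_apply, phi_natAdd, Equiv.Perm.one_apply]
  rw [hb, hz]

lemma p_rho (σ : Perm (Fin ((t + 1) + t))) (ρ : Perm (Fin t)) (μ τ : Perm (Fin (t + 1))) :
    pfun x σ (Equiv.Perm.decomposeFin.symm (0, ρ) * μ) τ = pfun x (σ * phi 1 ρ) μ τ := by
  unfold pfun
  have key : ∀ v : Fin (t + 1),
      (Fin.cons (blk x σ τ) (zf x σ) : Fin (t + 1) → A)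
          (Equiv.Perm.decomposeFin.symm (0, ρ) v)
        = (Fin.cons (blk x (σ * phi 1 ρ) τ) (zf x (σ * phi 1 ρ)) : Fin (t + 1) → A) v := by
    intro v
    refine Fin.cases ?_ (fun j => ?_) v
    · rw [Equiv.Perm.decomposeFin_symm_apply_zero, Fin.cons_zero, Fin.cons_zero]
      unfold blk
      refine congrArg List.prod (congrArg List.ofFn (funext fun j => ?_))
      rw [Equiv.Perm.mul_apply, phi_castAdd, Equiv.Perm.one_apply]
    · rw [Equiv.Perm.decomposeFin_symm_apply_succ, Equiv.swap_self, Equiv.refl_apply,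
        Fin.cons_succ, Fin.cons_succ]
      unfold zf
      rw [Equiv.Perm.mul_apply, phi_natAdd]
  refine congrArg List.prod (congrArg List.ofFn (funext fun i => ?_))
  rw [Equiv.Perm.mul_apply, key]

lemma p_word (σ : Perm (Fin ((t + 1) + t))) (k : Fin (t + 1)) :
    pfun x σ (Fin.cycleRange k) 1
      = qfun x (σ * rotPerm (t + 1) t k.val (by omega)) := by
  unfold pfun qfun
  rw [ofFn_cons_cycleRange t (blk x σ 1) (zf x σ) k]
  have h2 := ofFn_rotPerm (t + 1) t k.val (by omega)
    (fun r => x (σ r))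
  have h3 : (List.ofFn fun r => x ((σ * rotPerm (t + 1) t k.val (by omega)) r))
      = (List.ofFn fun r => (fun r' => x (σ r')) (rotPerm (t + 1) t k.val (by omega) r)) := rfl
  rw [h3, h2]
  rw [List.prod_append, List.prod_append, List.prod_append, List.prod_append,
    List.prod_singleton]
  rfl


lemma pull {ι : Type*} [Fintype ι] (c : ℤ) (g : ι → ℤ) (F : ι → A) :
    ∑ i, g i • (c • F i) = c • ∑ i, g i • F i := by
  rw [Finset.smul_sum]
  exact Finset.sum_congr rfl fun i _ => smul_comm _ _ _

lemma D_bij : Function.Bijective (fun kρ : Fin (t + 1) × Perm (Fin t) =>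
    Equiv.Perm.decomposeFin.symm (0, kρ.2) * Fin.cycleRange kρ.1) := by
  rw [Fintype.bijective_iff_injective_and_card]
  constructor
  · have h0 : ∀ (k : Fin (t + 1)) (ρ : Perm (Fin t)),
        (Equiv.Perm.decomposeFin.symm (0, ρ) * Fin.cycleRange k)⁻¹ 0 = k := by
      intro k ρ
      rw [mul_inv_rev, Equiv.Perm.mul_apply]
      have h1 : (Equiv.Perm.decomposeFin.symm ((0 : Fin (t+1)), ρ))⁻¹ 0 = 0 := by
        rw [Equiv.Perm.inv_eq_iff_eq, Equiv.Perm.decomposeFin_symm_apply_zero]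
      rw [h1, Equiv.Perm.inv_eq_iff_eq, Fin.cycleRange_self]
    rintro ⟨k, ρ⟩ ⟨k', ρ'⟩ h
    simp only at h
    have hk : k = k' := by
      have := congrArg (fun π : Perm (Fin (t + 1)) => π⁻¹ 0) h
      simpa only [h0] using this
    subst hk
    have h2 : Equiv.Perm.decomposeFin.symm (0, ρ) = Equiv.Perm.decomposeFin.symm (0, ρ') :=
      mul_right_cancel h
    have h3 := Equiv.Perm.decomposeFin.symm.injective h2
    simp only [Prod.mk.injEq] at h3
    rw [h3.2]
  · rw [Fintype.card_prod, Fintype.card_perm, Fintype.card_perm, Fintype.card_fin,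
      Fintype.card_fin, Nat.factorial_succ]

theorem GJI_general (ht : Odd t) :
    ∑ σ : Perm (Fin ((t + 1) + t)), (Equiv.Perm.sign σ : ℤ) •
        multibracket (Fin.cons (multibracket fun i : Fin (t + 1) => x (σ (Fin.castAdd t i)))
          (fun j : Fin t => x (σ (Fin.natAdd (t + 1) j)))) = 0 := by
  classical
  have hodd : Even (t + 1) := Odd.add_one ht
  set QA : A := ∑ σ : Perm (Fin ((t + 1) + t)), (sign σ : ℤ) • qfun x σ with hQA
  set S : Perm (Fin (t + 1)) → A :=
    fun π => ∑ σ : Perm (Fin ((t + 1) + t)), (sign σ : ℤ) • pfun x σ π 1 with hSdef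
  -- step 1: expand and absorb τ
  have step1 : ∀ π τ : Perm (Fin (t + 1)),
      (∑ σ : Perm (Fin ((t + 1) + t)), (sign σ : ℤ) •
        (((sign π : ℤ) * (sign τ : ℤ)) • pfun x σ π τ))
      = (sign π : ℤ) • S π := by
    intro π τ
    have e1 : ∀ σ : Perm (Fin ((t + 1) + t)),
        (sign σ : ℤ) • (((sign π : ℤ) * (sign τ : ℤ)) • pfun x σ π τ)
          = (sign σ : ℤ) • (((sign π : ℤ) * (sign τ : ℤ)) • pfun x (σ * phi τ 1) π 1) := by
      intro σ; rw [← p_tau]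
    rw [Finset.sum_congr rfl fun σ _ => e1 σ]
    rw [absorb (phi τ 1) (fun σ' => ((sign π : ℤ) * (sign τ : ℤ)) • pfun x σ' π 1)]
    rw [pull, sign_phi, map_one, mul_one, smul_smul]
    rw [show ((sign τ : ℤ)) * ((sign π : ℤ) * (sign τ : ℤ))
        = ((sign π : ℤ)) * ((sign τ : ℤ) * (sign τ : ℤ)) by ring, sq_one, mul_one, hSdef]
  -- step 2: evaluate S on the decomposition
  have step2 : ∀ (k : Fin (t + 1)) (ρ : Perm (Fin t)),
      S (Equiv.Perm.decomposeFin.symm (0, ρ) * Fin.cycleRange k) = (sign ρ : ℤ) • QA := by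
    intro k ρ
    rw [hSdef]
    simp only
    have e1 : ∀ σ : Perm (Fin ((t + 1) + t)),
        (sign σ : ℤ) • pfun x σ (Equiv.Perm.decomposeFin.symm (0, ρ) * Fin.cycleRange k) 1
          = (sign σ : ℤ) • pfun x (σ * phi 1 ρ) (Fin.cycleRange k) 1 := by
      intro σ; rw [p_rho]
    rw [Finset.sum_congr rfl fun σ _ => e1 σ]
    rw [absorb (phi 1 ρ) (fun σ' => pfun x σ' (Fin.cycleRange k) 1)]
    have e2 : ∀ σ : Perm (Fin ((t + 1) + t)),
        (sign σ : ℤ) • pfun x σ (Fin.cycleRange k) 1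
          = (sign σ : ℤ) • qfun x (σ * rotPerm (t + 1) t k.val (by omega)) := by
      intro σ; rw [p_word]
    rw [Finset.sum_congr rfl fun σ _ => e2 σ]
    rw [absorb (rotPerm (t + 1) t k.val (by omega)) (fun σ' => qfun x σ')]
    rw [sign_rotPerm (t + 1) t k.val (by omega) hodd (by omega), sign_phi, map_one, one_mul]
    rw [Units.val_one, one_smul]
  -- step 3: the sign of the decomposition
  have hsD : ∀ (k : Fin (t + 1)) (ρ : Perm (Fin t)),
      ((sign (Equiv.Perm.decomposeFin.symm (0, ρ) * Fin.cycleRange k) : ℤˣ) : ℤ)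
        = (sign ρ : ℤ) * (-1 : ℤ) ^ (k : ℕ) := by
    intro k ρ
    rw [Equiv.Perm.sign_mul, Equiv.Perm.decomposeFin.symm_sign, if_pos rfl, one_mul,
      Fin.sign_cycleRange, Units.val_mul]
    simp
  -- step 4: T = 0
  have hT : (∑ π : Perm (Fin (t + 1)), (sign π : ℤ) • S π) = 0 := by
    rw [← Fintype.sum_bijective _ D_bij
      (fun kρ : Fin (t + 1) × Perm (Fin t) =>
        (sign (Equiv.Perm.decomposeFin.symm (0, kρ.2) * Fin.cycleRange kρ.1) : ℤ) •
          S (Equiv.Perm.decomposeFin.symm (0, kρ.2) * Fin.cycleRange kρ.1))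
      (fun π => (sign π : ℤ) • S π) (fun kρ => rfl)]
    rw [Fintype.sum_prod_type]
    have : ∀ (k : Fin (t + 1)) (ρ : Perm (Fin t)),
        (sign (Equiv.Perm.decomposeFin.symm (0, ρ) * Fin.cycleRange k) : ℤ) •
          S (Equiv.Perm.decomposeFin.symm (0, ρ) * Fin.cycleRange k)
        = (-1 : ℤ) ^ (k : ℕ) • QA := by
      intro k ρ
      rw [step2, hsD, smul_smul]
      congr 1
      rw [show (sign ρ : ℤ) * (-1 : ℤ) ^ (k : ℕ) * (sign ρ : ℤ)
          = ((sign ρ : ℤ) * (sign ρ : ℤ)) * (-1 : ℤ) ^ (k : ℕ) by ring, sq_one, one_mul]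
    simp only [this]
    have hconst : ∀ k : Fin (t + 1),
        (∑ _ρ : Perm (Fin t), (-1 : ℤ) ^ (k : ℕ) • QA)
          = (-1 : ℤ) ^ (k : ℕ) • ((Fintype.card (Perm (Fin t))) • QA) := by
      intro k
      rw [Finset.sum_const, Finset.card_univ, smul_comm]
    simp only [hconst]
    rw [← Finset.sum_smul, neg_one_sum t ht, zero_smul]
  -- final assembly
  calc ∑ σ : Perm (Fin ((t + 1) + t)), (sign σ : ℤ) •
        multibracket (Fin.cons (multibracket fun i : Fin (t + 1) => x (σ (Fin.castAdd t i)))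
          (fun j : Fin t => x (σ (Fin.natAdd (t + 1) j))))
      = ∑ σ : Perm (Fin ((t + 1) + t)), (sign σ : ℤ) •
          (∑ π : Perm (Fin (t + 1)), ∑ τ : Perm (Fin (t + 1)),
            ((sign π : ℤ) * (sign τ : ℤ)) • pfun x σ π τ) := by
        exact Finset.sum_congr rfl fun σ _ =>
          congrArg (fun y => (Equiv.Perm.sign σ : ℤ) • y) (expand x σ)
    _ = ∑ σ : Perm (Fin ((t + 1) + t)), ∑ π : Perm (Fin (t + 1)), ∑ τ : Perm (Fin (t + 1)),
          (sign σ : ℤ) • (((sign π : ℤ) * (sign τ : ℤ)) • pfun x σ π τ) := by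
        refine Finset.sum_congr rfl fun σ _ => ?_
        rw [Finset.smul_sum]
        exact Finset.sum_congr rfl fun π _ => Finset.smul_sum
    _ = ∑ π : Perm (Fin (t + 1)), ∑ σ : Perm (Fin ((t + 1) + t)), ∑ τ : Perm (Fin (t + 1)),
          (sign σ : ℤ) • (((sign π : ℤ) * (sign τ : ℤ)) • pfun x σ π τ) := Finset.sum_comm
    _ = ∑ π : Perm (Fin (t + 1)), ∑ τ : Perm (Fin (t + 1)), ∑ σ : Perm (Fin ((t + 1) + t)),
          (sign σ : ℤ) • (((sign π : ℤ) * (sign τ : ℤ)) • pfun x σ π τ) :=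
        Finset.sum_congr rfl fun π _ => Finset.sum_comm
    _ = ∑ π : Perm (Fin (t + 1)), ∑ τ : Perm (Fin (t + 1)), (sign π : ℤ) • S π :=
        Finset.sum_congr rfl fun π _ => Finset.sum_congr rfl fun τ _ => step1 π τ
    _ = ∑ π : Perm (Fin (t + 1)), (Finset.univ.card : ℕ) • ((sign π : ℤ) • S π) :=
        Finset.sum_congr rfl fun π _ => (Finset.sum_const _)
    _ = (Finset.univ.card : ℕ) • ∑ π : Perm (Fin (t + 1)), (sign π : ℤ) • S π := by
        rw [← Finset.smul_sum]
    _ = 0 := by rw [hT, smul_zero]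

end core
end GJIAux


/-- for even `s = 2p+2`, the antisymmetrized multibracket of associative algebra
elements satisfies the generalized Jacobi identity
`Σ_{σ ∈ S_{2s-1}} sgn(σ) [[x_{σ(1)},...,x_{σ(s)}], x_{σ(s+1)},...,x_{σ(2s-1)}] = 0`. -/
theorem even_multibracket_GJI (p : ℕ) (A : Type*) [Ring A]
    (x : Fin ((2 * p + 2) + (2 * p + 1)) → A) :
    ∑ σ : Equiv.Perm (Fin ((2 * p + 2) + (2 * p + 1))),
      (Equiv.Perm.sign σ : ℤ) •
        multibracket
          (Fin.cons (multibracket fun i : Fin (2 * p + 2) => x (σ (Fin.castAdd (2 * p + 1) i)))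
            (fun j : Fin (2 * p + 1) => x (σ (Fin.natAdd (2 * p + 2) j)))) = 0 := by
  exact GJIAux.GJI_general (t := 2 * p + 1) x ⟨p, by ring⟩
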